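/- Let K ≥ 1, let p ≥ 1 be real, and let m ≥ 2 be an integer. Define F on ℝ^K by F(J)_i = J_i^m − J_i ∑_{j=1}^K J_j^{m−1} |J_j|^p, and let e_j be the j-th standard basis vector. Then F(e_j) = 0, F is Fréchet differentiable at e_j, and the derivative of F at e_j is a diagonal linear map all of whose diagonal entries are negative; hence the fully sparse weight configuration with one synaptic weight equal to 1 and the rest equal to 0 is a linearly stable equilibrium whenever a + c > 1. -/

import Mathlib

open Filter Topology

/-- Derivative of `x ↦ x^(m-1) * |x|^p` at `0` is `0` (for `m ≥ 2`, `p ≥ 1`). -/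
lemma stmt17_aux0 (p : ℝ) (hp : 1 ≤ p) (m : ℕ) (hm : 2 ≤ m) :
    HasDerivAt (fun x : ℝ => x ^ (m - 1) * |x| ^ p) 0 0 := by
  have hp0 : (0:ℝ) < p := lt_of_lt_of_le one_pos hp
  rw [hasDerivAt_iff_tendsto_slope]
  have hcont : ContinuousAt (fun x : ℝ => x ^ (m - 2) * |x| ^ p) 0 :=
    ((continuous_pow _).mul (continuous_abs.rpow_const fun x => Or.inr hp0.le)).continuousAt
  have htt := hcont.tendsto
  simp only [Real.zero_rpow hp0.ne', abs_zero, mul_zero] at htt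
  refine (htt.mono_left nhdsWithin_le_nhds).congr' ?_
  filter_upwards [self_mem_nhdsWithin] with x hx
  have hx0 : x ≠ 0 := hx
  have hm1 : m - 1 = (m - 2) + 1 := by omega
  simp only [slope_def_field, hm1, pow_succ]
  field_simp
  ring

/-- Derivative of `x ↦ x^(m-1) * |x|^p` at `1` is `(m-1) + p`. -/
lemma stmt17_aux1 (p : ℝ) (hp : 1 ≤ p) (m : ℕ) (hm : 2 ≤ m) :
    HasDerivAt (fun x : ℝ => x ^ (m - 1) * |x| ^ p) (((m : ℝ) - 1) + p) 1 := by
  have h1 : HasDerivAt (fun x : ℝ => x ^ (m - 1) * x ^ p) (((m : ℝ) - 1) + p) 1 := by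
    have ha := hasDerivAt_pow (m - 1) (1 : ℝ)
    have hb := Real.hasDerivAt_rpow_const (x := (1:ℝ)) (p := p) (Or.inl one_ne_zero)
    have := ha.mul hb
    simpa [Nat.cast_sub (by omega : 1 ≤ m), Pi.mul_def] using this
  refine h1.congr_of_eventuallyEq ?_
  filter_upwards [eventually_gt_nhds (show (0:ℝ) < 1 by norm_num)] with x hx
  rw [abs_of_pos hx]

/-- Diagonal input correlations with `m = a + c > 1`: the fully sparse configuration
`e_j` is an equilibrium of `F`, `F` is Fréchet differentiable there, and its
derivative is diagonal with all diagonal entries negative (linear stability). -/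
theorem stmt17 (K : ℕ) (hK : 1 ≤ K) (p : ℝ) (hp : 1 ≤ p)
    (m : ℕ) (hm : 2 ≤ m)
    (F : (Fin K → ℝ) → (Fin K → ℝ))
    (hF : F = fun J i => J i ^ m - J i * ∑ j, J j ^ (m - 1) * |J j| ^ p)
    (j : Fin K) :
    F (Pi.single j 1) = 0 ∧
    ∃ d : Fin K → ℝ, (∀ i, d i < 0) ∧
      HasFDerivAt (𝕜 := ℝ) F
        (ContinuousLinearMap.pi fun i => d i • ContinuousLinearMap.proj i)
        (Pi.single j 1) := by
  subst hF
  have hp0 : (0:ℝ) < p := lt_of_lt_of_le one_pos hp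
  set a : Fin K → ℝ := Pi.single j 1 with ha
  set g : ℝ → ℝ := fun x => x ^ (m - 1) * |x| ^ p with hg
  have hg1 : g 1 = 1 := by simp [hg, Real.one_rpow]
  have hg0' : g 0 = 0 := by simp [hg, zero_pow (by omega : m - 1 ≠ 0)]
  have hSa : (∑ k, g (a k)) = 1 := by
    rw [Finset.sum_eq_single j]
    · simp [ha, hg1]
    · intro k _ hk
      simp [ha, Pi.single_apply, hk, hg0']
    · simp
  constructor
  · funext i
    show a i ^ m - a i * (∑ k, g (a k)) = 0
    rw [hSa]
    by_cases hij : i = j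
    · simp [ha, hij]
    · simp [ha, Pi.single_apply, hij, zero_pow (by omega : m ≠ 0)]
  · refine ⟨fun i => if i = j then -p else -1, fun i => by
      by_cases h : i = j <;> simp [h] <;> linarith, ?_⟩
    -- projections
    have hproj : ∀ k : Fin K, HasFDerivAt (𝕜 := ℝ) (fun J : Fin K → ℝ => J k)
        (ContinuousLinearMap.proj k) a := by
      intro k; exact (ContinuousLinearMap.proj k : (Fin K → ℝ) →L[ℝ] ℝ).hasFDerivAt
    -- derivative of g at a k
    have hak : ∀ k : Fin K, HasDerivAt g (if k = j then ((m : ℝ) - 1) + p else 0) (a k) := by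
      intro k
      by_cases hk : k = j
      · simpa [hk, ha] using stmt17_aux1 p hp m hm
      · simpa [hk, ha, Pi.single_apply] using stmt17_aux0 p hp m hm
    -- derivative of the sum S
    have hS : HasFDerivAt (fun J : Fin K → ℝ => ∑ k, g (J k))
        (∑ k, (if k = j then ((m : ℝ) - 1) + p else 0) • ContinuousLinearMap.proj k) a :=
      HasFDerivAt.fun_sum fun k _ => by exact (hak k).comp_hasFDerivAt a (hproj k)
    rw [hasFDerivAt_pi']
    intro i
    have hpow : HasFDerivAt (fun J : Fin K → ℝ => J i ^ m)
        ((m * a i ^ (m - 1)) • ContinuousLinearMap.proj i) a :=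
      (hasDerivAt_pow m (a i)).comp_hasFDerivAt a (hproj i)
    have hmul := (hproj i).mul hS
    have htot := hpow.sub hmul
    have heq : ((m * a i ^ (m - 1)) • ContinuousLinearMap.proj i -
        (a i • (∑ k, (if k = j then ((m : ℝ) - 1) + p else 0) • ContinuousLinearMap.proj k) +
          (∑ k, g (a k)) • ContinuousLinearMap.proj i)) =
        ((if i = j then -p else -1) • ContinuousLinearMap.proj i :
          (Fin K → ℝ) →L[ℝ] ℝ) := by
      ext v
      have hsum : (∑ k, (if k = j then ((m : ℝ) - 1) + p else 0) * v k)
          = (((m : ℝ) - 1) + p) * v j := by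
        simp [ite_mul]
      simp only [ContinuousLinearMap.sub_apply, ContinuousLinearMap.add_apply,
        ContinuousLinearMap.smul_apply, ContinuousLinearMap.proj_apply,
        ContinuousLinearMap.coe_sum', Finset.sum_apply, smul_eq_mul, hSa, hsum]
      by_cases hij : i = j
      · subst hij
        simp only [ha, Pi.single_eq_same, one_pow, mul_one, one_mul, eq_self_iff_true, if_true]
        ring
      · have h0 : a i = 0 := by simp [ha, Pi.single_apply, hij]
        rw [h0, if_neg hij, zero_pow (show m - 1 ≠ 0 by omega)]
        ring
    rw [heq] at htot
    exact htot
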